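/- Let Ψ ⊂ ℂˣ × ℤ^r be a finite set such that 1 − a·e^ψ ≠ 0 in A for every (a,ψ) ∈ Ψ (equivalently, no element of Ψ equals (1,0)). Let Γ ≤ ℤ^r be the subgroup generated by the set Ξ = {ψ : (a,ψ) ∈ Ψ}, and let ℂ[Γ] ⊆ A be the subalgebra spanned by the basis elements e^γ with γ ∈ Γ. Then, in the fraction field K of A, the element ∏_{(a,ψ)∈Ψ} (1 − a·e^ψ)^{-1} lies in the ℂ[Γ]-submodule of K generated by the elements of the form ∏_{i=1}^s (1 − a_i·e^{ψ_i})^{-h_i}, where (a_i,ψ_i) ∈ Ψ for each i, h_i are positive integers, and ψ₁, …, ψ_s ∈ ℤ^r are linearly independent over ℚ. (Proposition 3.2, reduction to linearly independent denominators.) -/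

import Mathlib

/-- The Laurent polynomial ring `A = ℂ[ℤ^r]`, with basis elements `e^ψ`, `ψ ∈ ℤ^r`. -/
abbrev LaurentA (r : ℕ) : Type := AddMonoidAlgebra ℂ (Fin r → ℤ)

noncomputable instance {r : ℕ} : IsDomain (LaurentA r) := NoZeroDivisors.to_isDomain _

namespace Stmt3Aux

abbrev Pt (r : ℕ) := ℂˣ × (Fin r → ℤ)

noncomputable def sing {r : ℕ} (p : Pt r) : LaurentA r := AddMonoidAlgebra.single p.2 (p.1 : ℂ)

noncomputable def ffac {r : ℕ} (p : Pt r) : LaurentA r := 1 - sing p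

variable {r : ℕ}

noncomputable def CC (Γ : AddSubgroup (Fin r → ℤ)) : Submodule ℂ (LaurentA r) :=
  Submodule.span ℂ {x : LaurentA r | ∃ γ ∈ Γ, x = AddMonoidAlgebra.single γ (1 : ℂ)}

lemma single_mem_CC {Γ : AddSubgroup (Fin r → ℤ)} {γ} (hγ : γ ∈ Γ) (c : ℂ) :
    AddMonoidAlgebra.single γ c ∈ CC Γ := by
  have h1 : AddMonoidAlgebra.single γ (1:ℂ) ∈ CC Γ := Submodule.subset_span ⟨γ, hγ, rfl⟩
  have : AddMonoidAlgebra.single γ c = c • AddMonoidAlgebra.single γ (1:ℂ) := by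
    rw [AddMonoidAlgebra.smul_single, smul_eq_mul, mul_one]
  rw [this]
  exact Submodule.smul_mem _ _ h1

lemma one_mem_CC {Γ : AddSubgroup (Fin r → ℤ)} : (1 : LaurentA r) ∈ CC Γ := by
  rw [AddMonoidAlgebra.one_def]
  exact single_mem_CC Γ.zero_mem 1

lemma mul_mem_CC {Γ : AddSubgroup (Fin r → ℤ)} {x y : LaurentA r}
    (hx : x ∈ CC Γ) (hy : y ∈ CC Γ) : x * y ∈ CC Γ := by
  induction hx using Submodule.span_induction with
  | mem a ha =>
    obtain ⟨γ, hγ, rfl⟩ := ha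
    induction hy using Submodule.span_induction with
    | mem b hb =>
      obtain ⟨γ', hγ', rfl⟩ := hb
      rw [AddMonoidAlgebra.single_mul_single, mul_one]
      exact Submodule.subset_span ⟨γ + γ', Γ.add_mem hγ hγ', rfl⟩
    | zero => rw [mul_zero]; exact Submodule.zero_mem _
    | add b c _ _ hb hc => rw [mul_add]; exact Submodule.add_mem _ hb hc
    | smul a b _ hb => rw [mul_smul_comm]; exact Submodule.smul_mem _ _ hb
  | zero => rw [zero_mul]; exact Submodule.zero_mem _
  | add a b _ _ ha hb => rw [add_mul]; exact Submodule.add_mem _ ha hb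
  | smul a b _ hb => rw [smul_mul_assoc]; exact Submodule.smul_mem _ _ hb

lemma pow_mem_CC {Γ : AddSubgroup (Fin r → ℤ)} {x : LaurentA r}
    (hx : x ∈ CC Γ) (n : ℕ) : x ^ n ∈ CC Γ := by
  induction n with
  | zero => simpa using one_mem_CC
  | succ n ih => rw [pow_succ]; exact mul_mem_CC ih hx

lemma prod_sing_pow (s : Finset (Pt r)) (m : Pt r → ℕ) :
    ∏ p ∈ s, sing p ^ m p =
      AddMonoidAlgebra.single (∑ p ∈ s, m p • p.2) (∏ p ∈ s, (p.1 : ℂ) ^ m p) := by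
  classical
  induction s using Finset.induction_on with
  | empty => simp [AddMonoidAlgebra.one_def]
  | insert _ _ hns ih =>
    rw [Finset.prod_insert hns, Finset.prod_insert hns, Finset.sum_insert hns, ih,
      sing, AddMonoidAlgebra.single_pow, AddMonoidAlgebra.single_mul_single]


variable {r : ℕ}

noncomputable abbrev KK (r : ℕ) := FractionRing (LaurentA r)

noncomputable def algK (r : ℕ) : LaurentA r →+* KK r := algebraMap (LaurentA r) (KK r)

lemma algK_smul (a : ℂ) (x : LaurentA r) : algK r (a • x) = a • algK r x := by
  show algebraMap (LaurentA r) (KK r) (a • x) = a • algebraMap (LaurentA r) (KK r) x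
  exact map_smul (IsScalarTower.toAlgHom ℂ (LaurentA r) (KK r)) a x

/-- the submodule `N_T` of `A` : `C`-combinations of the `f_p`, `p ∈ T`. -/
noncomputable def NN (Γ : AddSubgroup (Fin r → ℤ)) (T : Finset (Pt r)) :
    Submodule ℂ (LaurentA r) :=
  Submodule.span ℂ {x : LaurentA r | ∃ c ∈ CC Γ, ∃ p ∈ T, x = c * ffac p}

lemma mul_mem_NN {Γ : AddSubgroup (Fin r → ℤ)} {T : Finset (Pt r)} {c x : LaurentA r}
    (hc : c ∈ CC Γ) (hx : x ∈ NN Γ T) : c * x ∈ NN Γ T := by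
  induction hx using Submodule.span_induction with
  | mem a ha =>
    obtain ⟨c', hc', p, hp, rfl⟩ := ha
    rw [← mul_assoc]
    exact Submodule.subset_span ⟨c * c', mul_mem_CC hc hc', p, hp, rfl⟩
  | zero => rw [mul_zero]; exact Submodule.zero_mem _
  | add a b _ _ ha hb => rw [mul_add]; exact Submodule.add_mem _ ha hb
  | smul a b _ hb => rw [mul_smul_comm]; exact Submodule.smul_mem _ _ hb

lemma one_sub_pow_mem_NN {Γ : AddSubgroup (Fin r → ℤ)} {T : Finset (Pt r)} {p : Pt r}
    (hsing : sing p ∈ CC Γ) (hp : p ∈ T) (k : ℕ) :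
    (1 : LaurentA r) - sing p ^ k ∈ NN Γ T := by
  induction k with
  | zero => simp
  | succ k ih =>
    have h1 : (1 : LaurentA r) - sing p ^ (k+1)
        = (1 - sing p ^ k) + sing p ^ k * (1 * ffac p) := by
      rw [ffac]; ring
    rw [h1]
    refine Submodule.add_mem _ ih (mul_mem_NN (pow_mem_CC hsing k) ?_)
    exact Submodule.subset_span ⟨1, one_mem_CC, p, hp, rfl⟩

lemma one_sub_prod_mem_NN {Γ : AddSubgroup (Fin r → ℤ)} {T : Finset (Pt r)}
    (s : Finset (Pt r)) (hsing : ∀ p ∈ s, sing p ∈ CC Γ) (m : Pt r → ℕ)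
    (hm : ∀ p ∈ s, m p ≠ 0 → p ∈ T) :
    (1 : LaurentA r) - ∏ p ∈ s, sing p ^ m p ∈ NN Γ T := by
  classical
  induction s using Finset.induction_on with
  | empty => simp
  | @insert q s hns ih =>
    rw [Finset.prod_insert hns]
    have h1 : (1 : LaurentA r) - sing q ^ m q * ∏ p ∈ s, sing p ^ m p
        = (1 - sing q ^ m q) + sing q ^ m q * (1 - ∏ p ∈ s, sing p ^ m p) := by ring
    rw [h1]
    have hq : sing q ∈ CC Γ := hsing q (Finset.mem_insert_self _ _)
    have hrest : (1 : LaurentA r) - ∏ p ∈ s, sing p ^ m p ∈ NN Γ T :=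
      ih (fun p hp => hsing p (Finset.mem_insert_of_mem hp))
        (fun p hp h0 => hm p (Finset.mem_insert_of_mem hp) h0)
    refine Submodule.add_mem _ ?_ (mul_mem_NN (pow_mem_CC hq _) hrest)
    by_cases h0 : m q = 0
    · simp [h0]
    · exact one_sub_pow_mem_NN hq (hm q (Finset.mem_insert_self _ _) h0) _


/-- The set of generators: inverses of products with linearly independent exponents. -/
def Gen (Ψ : Finset (Pt r)) : Set (KK r) :=
  {x : KK r | ∃ (s : ℕ) (p : Fin s → ℂˣ × (Fin r → ℤ)) (h : Fin s → ℕ),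
      (∀ i, p i ∈ Ψ) ∧ (∀ i, 0 < h i) ∧
      LinearIndependent ℚ (fun (i : Fin s) (l : Fin r) => (((p i).2 l : ℚ))) ∧
      x = (∏ i, (algebraMap (LaurentA r) (FractionRing (LaurentA r))
          ((1 : LaurentA r) - AddMonoidAlgebra.single (p i).2 (((p i).1 : ℂ)))) ^ (h i))⁻¹}

noncomputable def MM (Ψ : Finset (Pt r)) (Γ : AddSubgroup (Fin r → ℤ)) :
    Submodule ℂ (KK r) :=
  Submodule.span ℂ {x : KK r | ∃ c ∈ CC Γ, ∃ g ∈ Gen Ψ, x = algK r c * g}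

lemma mul_mem_MM {Ψ : Finset (Pt r)} {Γ : AddSubgroup (Fin r → ℤ)} {c : LaurentA r}
    {x : KK r} (hc : c ∈ CC Γ) (hx : x ∈ MM Ψ Γ) : algK r c * x ∈ MM Ψ Γ := by
  induction hx using Submodule.span_induction with
  | mem a ha =>
    obtain ⟨c', hc', g, hg, rfl⟩ := ha
    rw [← mul_assoc, ← map_mul]
    exact Submodule.subset_span ⟨c * c', mul_mem_CC hc hc', g, hg, rfl⟩
  | zero => rw [mul_zero]; exact Submodule.zero_mem _
  | add a b _ _ ha hb => rw [mul_add]; exact Submodule.add_mem _ ha hb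
  | smul a b _ hb => rw [mul_smul_comm]; exact Submodule.smul_mem _ _ hb

section Main

variable (Ψ : Finset (Pt r))

/-- the big product attached to an exponent vector -/
noncomputable def GG (h : Pt r → ℕ) : KK r := (∏ p ∈ Ψ, algK r (ffac p) ^ h p)⁻¹

variable {Ψ}

lemma algK_ffac_ne_zero (hΨ : ∀ p ∈ Ψ, ffac p ≠ 0) {p : Pt r} (hp : p ∈ Ψ) : algK r (ffac p) ≠ 0 := by
  have := hΨ p hp
  simpa [algK, map_ne_zero_iff _ (IsFractionRing.injective (LaurentA r) (KK r))] using this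

lemma prod_ne_zero (hΨ : ∀ p ∈ Ψ, ffac p ≠ 0) (h : Pt r → ℕ) : (∏ p ∈ Ψ, algK r (ffac p) ^ h p) ≠ 0 := by
  rw [Finset.prod_ne_zero_iff]
  exact fun p hp => pow_ne_zero _ (algK_ffac_ne_zero hΨ hp)

lemma prod_update_add {q : Pt r} (hq : q ∈ Ψ) (h : Pt r → ℕ) :
    (∏ p ∈ Ψ, algK r (ffac p) ^ (Function.update h q (h q + 1)) p)
      = algK r (ffac q) * ∏ p ∈ Ψ, algK r (ffac p) ^ h p := by
  classical
  rw [← Finset.mul_prod_erase Ψ _ hq, ← Finset.mul_prod_erase Ψ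
    (fun p => algK r (ffac p) ^ h p) hq]
  rw [Function.update_self, pow_succ]
  rw [Finset.prod_congr rfl (fun p hp => by
    rw [Function.update_of_ne (Finset.ne_of_mem_erase hp)])]
  ring

lemma GG_update_add (hΨ : ∀ p ∈ Ψ, ffac p ≠ 0) {q : Pt r} (hq : q ∈ Ψ) (h : Pt r → ℕ) :
    algK r (ffac q) * GG Ψ (Function.update h q (h q + 1)) = GG Ψ h := by
  rw [GG, GG, prod_update_add hq h, mul_inv]
  rw [← mul_assoc, mul_inv_cancel₀ (algK_ffac_ne_zero hΨ hq), one_mul]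

lemma GG_update_sub (hΨ : ∀ p ∈ Ψ, ffac p ≠ 0) {q : Pt r} (hq : q ∈ Ψ) (h : Pt r → ℕ) (h1 : 0 < h q) :
    algK r (ffac q) * GG Ψ h = GG Ψ (Function.update h q (h q - 1)) := by
  have := GG_update_add hΨ hq (Function.update h q (h q - 1))
  rw [Function.update_idem, Function.update_self] at this
  rw [Nat.sub_add_cancel h1, Function.update_eq_self] at this
  exact this

lemma NN_mul_GG (hΨ : ∀ p ∈ Ψ, ffac p ≠ 0) {Γ : AddSubgroup (Fin r → ℤ)} {T : Finset (Pt r)} {x : LaurentA r}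
    (hx : x ∈ NN Γ T) (h : Pt r → ℕ)
    (hT : ∀ p ∈ T, p ∈ Ψ ∧ 0 < h p ∧ GG Ψ (Function.update h p (h p - 1)) ∈ MM Ψ Γ) :
    algK r x * GG Ψ h ∈ MM Ψ Γ := by
  induction hx using Submodule.span_induction with
  | mem a ha =>
    obtain ⟨c, hc, p, hp, rfl⟩ := ha
    obtain ⟨hpΨ, hp1, hmem⟩ := hT p hp
    rw [map_mul, mul_assoc, GG_update_sub hΨ hpΨ h hp1]
    exact mul_mem_MM hc hmem
  | zero => rw [map_zero, zero_mul]; exact Submodule.zero_mem _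
  | add a b _ _ ha hb => rw [map_add, add_mul]; exact Submodule.add_mem _ ha hb
  | smul a b _ hb =>
    rw [algK_smul, smul_mul_assoc]
    exact Submodule.smul_mem _ _ hb

end Main


section Measure

variable (Ψ : Finset (Pt r))

noncomputable def idx (p : Pt r) : ℕ :=
  if hp : p ∈ Ψ then (Ψ.equivFin ⟨p, hp⟩ : ℕ) else 0

noncomputable def Wt (p : Pt r) : ℕ := 2 ^ (Ψ.card - idx Ψ p)

noncomputable def mu (h : Pt r → ℕ) : ℕ := ∑ p ∈ Ψ, h p * Wt Ψ p

variable {Ψ}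

lemma idx_lt_card {p : Pt r} (hp : p ∈ Ψ) : idx Ψ p < Ψ.card := by
  rw [idx, dif_pos hp]
  exact (Ψ.equivFin ⟨p, hp⟩).2

lemma idx_inj {p q : Pt r} (hp : p ∈ Ψ) (hq : q ∈ Ψ) (h : idx Ψ p = idx Ψ q) : p = q := by
  rw [idx, dif_pos hp, idx, dif_pos hq] at h
  have := Ψ.equivFin.injective (Fin.val_injective h)
  exact congrArg Subtype.val this

lemma Wt_pos (p : Pt r) : 0 < Wt Ψ p := Nat.pow_pos (by norm_num)

lemma Wt_lt {p q : Pt r} (hq : q ∈ Ψ) (h : idx Ψ p < idx Ψ q) : Wt Ψ q < Wt Ψ p := by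
  rw [Wt, Wt]
  apply Nat.pow_lt_pow_right (by norm_num)
  have hqc := idx_lt_card hq
  omega

lemma mu_update {q : Pt r} (hq : q ∈ Ψ) (h : Pt r → ℕ) (v : ℕ) :
    mu Ψ (Function.update h q v) + h q * Wt Ψ q = mu Ψ h + v * Wt Ψ q := by
  classical
  rw [mu, mu, ← Finset.add_sum_erase Ψ _ hq, ← Finset.add_sum_erase Ψ
    (fun p => h p * Wt Ψ p) hq]
  rw [Function.update_self]
  rw [Finset.sum_congr rfl (fun p hp => by
    rw [Function.update_of_ne (Finset.ne_of_mem_erase hp)])]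
  ring

lemma mu_update_sub {q : Pt r} (hq : q ∈ Ψ) (h : Pt r → ℕ) (h1 : 0 < h q) :
    mu Ψ (Function.update h q (h q - 1)) < mu Ψ h := by
  have e1 := mu_update hq h (h q - 1)
  have wpos := Wt_pos (Ψ := Ψ) q
  have e : (h q - 1) * Wt Ψ q + Wt Ψ q = h q * Wt Ψ q := by
    have hsp : h q - 1 + 1 = h q := Nat.succ_pred_eq_of_pos h1
    calc (h q - 1) * Wt Ψ q + Wt Ψ q = (h q - 1 + 1) * Wt Ψ q := by ring
    _ = h q * Wt Ψ q := by rw [hsp]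
  omega

lemma mu_update_addsub {q p : Pt r} (hq : q ∈ Ψ) (hp : p ∈ Ψ) (hne : p ≠ q)
    (h : Pt r → ℕ) (hp0 : 0 < h p) (hlt : idx Ψ p < idx Ψ q) :
    mu Ψ (Function.update (Function.update h q (h q + 1)) p
        ((Function.update h q (h q + 1)) p - 1)) < mu Ψ h := by
  set h1 := Function.update h q (h q + 1) with hh1
  have hp1 : h1 p = h p := by rw [hh1, Function.update_of_ne hne]
  have e1 := mu_update hq h (h q + 1)
  rw [← hh1] at e1
  have e4 : (h q + 1) * Wt Ψ q = h q * Wt Ψ q + Wt Ψ q := by ring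
  have e2 := mu_update hp h1 (h1 p - 1)
  rw [hp1] at e2 ⊢
  have e5 : (h p - 1) * Wt Ψ p + Wt Ψ p = h p * Wt Ψ p := by
    have hsp : h p - 1 + 1 = h p := Nat.succ_pred_eq_of_pos hp0
    calc (h p - 1) * Wt Ψ p + Wt Ψ p = (h p - 1 + 1) * Wt Ψ p := by ring
    _ = h p * Wt Ψ p := by rw [hsp]
  have hWlt := Wt_lt hq hlt
  omega

end Measure


section Moves

variable {Ψ : Finset (Pt r)} {Γ : AddSubgroup (Fin r → ℤ)}

lemma algebraMap_C_single (c : ℂ) :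
    algebraMap ℂ (LaurentA r) c = AddMonoidAlgebra.single 0 c := by
  rw [Algebra.algebraMap_eq_smul_one, AddMonoidAlgebra.one_def, AddMonoidAlgebra.smul_single,
    smul_eq_mul, mul_one]

/-- Move B : a relation whose two sides have different constants gives `1 ∈ N_T`. -/
lemma one_mem_NN_of_rel (hsingT : ∀ p ∈ T, sing p ∈ CC Γ) (m k : Pt r → ℕ)
    (θeq : ∑ p ∈ T, m p • p.2 = ∑ p ∈ T, k p • p.2)
    (hc : (∏ p ∈ T, (p.1 : ℂ) ^ m p) ≠ ∏ p ∈ T, (p.1 : ℂ) ^ k p) :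
    (1 : LaurentA r) ∈ NN Γ T := by
  classical
  set X := ∏ p ∈ T, sing p ^ m p with hXdef
  set Y := ∏ p ∈ T, sing p ^ k p with hYdef
  set cm := ∏ p ∈ T, (p.1 : ℂ) ^ m p with hcm
  set ck := ∏ p ∈ T, (p.1 : ℂ) ^ k p with hck
  have hX : X = AddMonoidAlgebra.single (∑ p ∈ T, m p • p.2) cm := prod_sing_pow T m
  have hY : Y = AddMonoidAlgebra.single (∑ p ∈ T, k p • p.2) ck := prod_sing_pow T k
  have hck0 : ck ≠ 0 := by
    rw [hck, Finset.prod_ne_zero_iff]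
    exact fun p _ => pow_ne_zero _ (Units.ne_zero p.1)
  set c : ℂ := cm * ck⁻¹ with hcdef
  have hc1 : (1 : ℂ) - c ≠ 0 := by
    rw [hcdef]
    intro hcon
    apply hc
    have h1 : cm * ck⁻¹ = 1 := (sub_eq_zero.mp hcon).symm
    field_simp at h1
    exact h1
  have hCY : algebraMap ℂ (LaurentA r) c * Y = X := by
    rw [algebraMap_C_single, hY, AddMonoidAlgebra.single_mul_single, zero_add, ← θeq, hX]
    congr 1
    rw [hcdef]
    field_simp
  have hmemX : (1 : LaurentA r) - X ∈ NN Γ T :=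
    one_sub_prod_mem_NN T hsingT m (fun p hp _ => hp)
  have hmemY : (1 : LaurentA r) - Y ∈ NN Γ T :=
    one_sub_prod_mem_NN T hsingT k (fun p hp _ => hp)
  have key : ((1 : ℂ) - c) • (1 : LaurentA r) = (1 - X) - c • (1 - Y) := by
    rw [Algebra.smul_def ((1:ℂ) - c), Algebra.smul_def c, map_sub, map_one]
    linear_combination -hCY
  have mem2 : ((1 : ℂ) - c) • (1 : LaurentA r) ∈ NN Γ T := by
    rw [key]
    exact Submodule.sub_mem _ hmemX (Submodule.smul_mem _ _ hmemY)
  have : (1 : LaurentA r) = ((1:ℂ) - c)⁻¹ • (((1:ℂ) - c) • (1 : LaurentA r)) := by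
    rw [smul_smul, inv_mul_cancel₀ hc1, one_smul]
  rw [this]
  exact Submodule.smul_mem _ _ mem2

/-- Move C : a relation with equal constants; `q` the maximal element. -/
lemma moveC (hΨ : ∀ p ∈ Ψ, ffac p ≠ 0) (hsing : ∀ p ∈ Ψ, sing p ∈ CC Γ)
    {T : Finset (Pt r)} (h : Pt r → ℕ)
    (hT : ∀ p ∈ T, p ∈ Ψ ∧ 0 < h p)
    (IH : ∀ h' : Pt r → ℕ, mu Ψ h' < mu Ψ h → GG Ψ h' ∈ MM Ψ Γ)
    (m k : Pt r → ℕ) {q : Pt r} (hqT : q ∈ T) (hmq : m q = 0) (hkq : 0 < k q)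
    (hmax : ∀ p ∈ T, p ≠ q → idx Ψ p < idx Ψ q)
    (hXY : ∏ p ∈ T, sing p ^ m p = ∏ p ∈ T, sing p ^ k p) :
    GG Ψ h ∈ MM Ψ Γ := by
  classical
  obtain ⟨hqΨ, hq0⟩ := hT q hqT
  set v : LaurentA r := sing q with hv
  set M : ℕ := k q with hM
  set T' : Finset (Pt r) := T.erase q with hT'
  have hsingT : ∀ p ∈ T, sing p ∈ CC Γ := fun p hp => hsing p (hT p hp).1
  have hsingT' : ∀ p ∈ T', sing p ∈ CC Γ := fun p hp => hsingT p (Finset.mem_of_mem_erase hp)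
  have geom : ∀ i : ℕ, (∑ j ∈ Finset.range i, v ^ j) * ffac q = 1 - v ^ i := by
    intro i
    have hgs := geom_sum_mul v i
    rw [ffac, ← hv]
    linear_combination -hgs
  set P : LaurentA r := ∑ i ∈ Finset.range M, v ^ i with hP
  set Y₂ : LaurentA r := ∏ p ∈ T', sing p ^ k p with hY₂
  have hYdec : ∏ p ∈ T, sing p ^ k p = v ^ M * Y₂ := by
    rw [hY₂, hT', hv, hM]
    exact (Finset.mul_prod_erase T (fun p => sing p ^ k p) hqT).symm
  have hX2 : ∏ p ∈ T, sing p ^ m p = v ^ M * Y₂ := hXY.trans hYdec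
  have memN : P * ffac q ∈ NN Γ T' := by
    have e : P * ffac q
        = (1 - ∏ p ∈ T, sing p ^ m p) - v ^ M * (1 - Y₂) := by
      rw [hP, geom M]
      linear_combination hX2
    rw [e]
    have h1 : (1 : LaurentA r) - ∏ p ∈ T, sing p ^ m p ∈ NN Γ T' := by
      apply one_sub_prod_mem_NN T hsingT m
      intro p hp hmp
      refine Finset.mem_erase.mpr ⟨?_, hp⟩
      intro hpq
      exact hmp (hpq ▸ hmq)
    have h2 : (1 : LaurentA r) - Y₂ ∈ NN Γ T' :=
      one_sub_prod_mem_NN T' hsingT' k (fun p hp _ => hp)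
    have h3 : v ^ M ∈ CC Γ := pow_mem_CC (hsing q hqΨ) M
    exact Submodule.sub_mem _ h1 (mul_mem_NN h3 h2)
  -- Bezout
  set α : LaurentA r := ∑ i ∈ Finset.range M, ∑ j ∈ Finset.range i, v ^ j with hα
  have bez : α * ffac q + P = (M : ℂ) • (1 : LaurentA r) := by
    rw [hα, Finset.sum_mul]
    rw [Finset.sum_congr rfl (fun i _ => geom i)]
    rw [hP, ← Finset.sum_add_distrib]
    simp only [sub_add_cancel]
    rw [Finset.sum_const, Finset.card_range, Nat.cast_smul_eq_nsmul]
  have αmem : α ∈ CC Γ := by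
    rw [hα]
    refine Submodule.sum_mem _ (fun i _ => Submodule.sum_mem _ (fun j _ => ?_))
    exact pow_mem_CC (hsing q hqΨ) j
  have hMne : (M : ℂ) ≠ 0 := Nat.cast_ne_zero.mpr hkq.ne'
  -- two terms
  have term1 : algK r (α * ffac q) * GG Ψ h ∈ MM Ψ Γ := by
    rw [map_mul, mul_assoc, GG_update_sub hΨ hqΨ h hq0]
    exact mul_mem_MM αmem (IH _ (mu_update_sub hqΨ h hq0))
  set h2 : Pt r → ℕ := Function.update h q (h q + 1) with hh2
  have term2 : algK r P * GG Ψ h ∈ MM Ψ Γ := by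
    have e2 : algK r P * GG Ψ h = algK r (P * ffac q) * GG Ψ h2 := by
      rw [map_mul, mul_assoc, GG_update_add hΨ hqΨ h]
    rw [e2]
    apply NN_mul_GG hΨ memN h2
    intro p hp
    have hpT : p ∈ T := Finset.mem_of_mem_erase hp
    have hpq : p ≠ q := Finset.ne_of_mem_erase hp
    obtain ⟨hpΨ, hp0⟩ := hT p hpT
    refine ⟨hpΨ, ?_, ?_⟩
    · rw [hh2, Function.update_of_ne hpq]; exact hp0
    · exact IH _ (mu_update_addsub hqΨ hpΨ hpq h hp0 (hmax p hpT hpq))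
  -- combine
  have sum : algK r (α * ffac q) * GG Ψ h + algK r P * GG Ψ h = (M : ℂ) • GG Ψ h := by
    rw [← add_mul, ← map_add, bez, algK_smul, map_one, smul_mul_assoc, one_mul]
  have : GG Ψ h = (M : ℂ)⁻¹ • (algK r (α * ffac q) * GG Ψ h + algK r P * GG Ψ h) := by
    rw [sum, smul_smul, inv_mul_cancel₀ hMne, one_smul]
  rw [this]
  exact Submodule.smul_mem _ _ (Submodule.add_mem _ term1 term2)

end Moves

section MainInduction

variable {Ψ : Finset (Pt r)} {Γ : AddSubgroup (Fin r → ℤ)}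

lemma main_induction (hΨ : ∀ p ∈ Ψ, ffac p ≠ 0) (hsing : ∀ p ∈ Ψ, sing p ∈ CC Γ) :
    ∀ (N : ℕ) (h : Pt r → ℕ), mu Ψ h ≤ N → GG Ψ h ∈ MM Ψ Γ := by
  classical
  intro N
  induction N using Nat.strong_induction_on with
  | _ N IHN =>
  intro h hμ
  have IH : ∀ h' : Pt r → ℕ, mu Ψ h' < mu Ψ h → GG Ψ h' ∈ MM Ψ Γ := fun h' hlt =>
    IHN (mu Ψ h') (lt_of_lt_of_le hlt hμ) h' le_rfl
  by_cases hdep : ∃ n : Pt r → ℤ, (∀ p, n p ≠ 0 → p ∈ Ψ ∧ 0 < h p) ∧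
      (∑ p ∈ Ψ, n p • p.2) = 0 ∧ ∃ p, n p ≠ 0
  · -- dependent case
    obtain ⟨n, hn1, hn2, p₀, hp₀⟩ := hdep
    set T := Ψ.filter (fun p => n p ≠ 0) with hTdef
    have hTmem : ∀ p ∈ T, p ∈ Ψ ∧ 0 < h p := fun p hp => hn1 p (Finset.mem_filter.mp hp).2
    have hTne : T.Nonempty := ⟨p₀, Finset.mem_filter.mpr ⟨(hn1 p₀ hp₀).1, hp₀⟩⟩
    have hsingT : ∀ p ∈ T, sing p ∈ CC Γ := fun p hp => hsing p (hTmem p hp).1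
    set m : Pt r → ℕ := fun p => (n p).toNat with hm
    set k : Pt r → ℕ := fun p => (-(n p)).toNat with hk
    have hsum : ∑ p ∈ T, n p • p.2 = 0 := by
      rw [hTdef]
      rw [Finset.sum_filter_of_ne (p := fun p => n p ≠ 0) (f := fun p => n p • p.2)
        (fun x _ hfx h0 => hfx (by simp [h0]))]
      exact hn2
    have θeq : (∑ p ∈ T, m p • p.2) = ∑ p ∈ T, k p • p.2 := by
      have e1 : ∑ p ∈ T, ((m p : ℤ) • p.2 - (k p : ℤ) • p.2) = 0 := by
        rw [← hsum]
        refine Finset.sum_congr rfl (fun p _ => ?_)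
        rw [← sub_smul]
        congr 1
        simp only [hm, hk]
        omega
      rw [Finset.sum_sub_distrib] at e1
      have e2 := sub_eq_zero.mp e1
      simpa [natCast_zsmul] using e2
    by_cases hc : (∏ p ∈ T, (p.1 : ℂ) ^ m p) = ∏ p ∈ T, (p.1 : ℂ) ^ k p
    · -- equal constants : move C
      obtain ⟨q, hqT, hqmax⟩ := Finset.exists_max_image T (idx Ψ) hTne
      have hmax : ∀ p ∈ T, p ≠ q → idx Ψ p < idx Ψ q := fun p hp hne =>
        lt_of_le_of_ne (hqmax p hp)
          (fun he => hne (idx_inj (hTmem p hp).1 (hTmem q hqT).1 he))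
      have hnq : n q ≠ 0 := (Finset.mem_filter.mp hqT).2
      have hXY : ∏ p ∈ T, sing p ^ m p = ∏ p ∈ T, sing p ^ k p := by
        rw [prod_sing_pow, prod_sing_pow, θeq, hc]
      rcases lt_or_gt_of_ne hnq with hlt | hgt
      · refine moveC hΨ hsing h hTmem IH m k hqT ?_ ?_ hmax hXY
        · simp only [hm]; omega
        · simp only [hk]; omega
      · refine moveC hΨ hsing h hTmem IH k m hqT ?_ ?_ hmax hXY.symm
        · simp only [hk]; omega
        · simp only [hm]; omega
    · -- distinct constants : move B
      have h1 : (1 : LaurentA r) ∈ NN Γ T := one_mem_NN_of_rel hsingT m k θeq hc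
      have e : GG Ψ h = algK r (1 : LaurentA r) * GG Ψ h := by rw [map_one, one_mul]
      rw [e]
      exact NN_mul_GG hΨ h1 h (fun p hp => ⟨(hTmem p hp).1, (hTmem p hp).2,
        IH _ (mu_update_sub (hTmem p hp).1 h (hTmem p hp).2)⟩)
  · -- independent case : base
    set S := Ψ.filter (fun p => 0 < h p) with hSdef
    have hSsub : S ⊆ Ψ := Finset.filter_subset _ _
    set e : ↥S ≃ Fin S.card := S.equivFin with he
    set pf : Fin S.card → Pt r := fun i => ↑(e.symm i) with hpf
    have hpfΨ : ∀ i, pf i ∈ Ψ := fun i => hSsub (e.symm i).2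
    have hpfpos : ∀ i, 0 < h (pf i) := fun i => (Finset.mem_filter.mp (e.symm i).2).2
    have hli : LinearIndependent ℚ (fun (i : Fin S.card) (l : Fin r) => (((pf i).2 l : ℚ))) := by
      rw [Fintype.linearIndependent_iff]
      intro g hg
      obtain ⟨b, hb⟩ := IsLocalization.exist_integer_multiples
        (nonZeroDivisors ℤ) Finset.univ g
      have hb' : ∀ i : Fin S.card, ∃ y : ℤ, algebraMap ℤ ℚ y = (b : ℤ) • g i :=
        fun i => hb i (Finset.mem_univ i)
      choose nI hnI using hb'
      set n : Pt r → ℤ := fun p => if hp : p ∈ S then nI (e ⟨p, hp⟩) else 0 with hn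
      have hnval : ∀ i, n (pf i) = nI i := by
        intro i
        have hmem : pf i ∈ S := (e.symm i).2
        simp only [hn]
        rw [dif_pos hmem]
        congr 1
        have h2 : (⟨pf i, hmem⟩ : ↥S) = e.symm i := Subtype.ext rfl
        rw [h2, Equiv.apply_symm_apply]
      have hbne : ((b : ℤ) : ℚ) ≠ 0 := by
        have := nonZeroDivisors.coe_ne_zero b
        exact_mod_cast this
      have hcast : ∀ i, (nI i : ℚ) = ((b : ℤ) : ℚ) * g i := by
        intro i
        have := hnI i
        rw [eq_comm, zsmul_eq_mul] at this
        exact_mod_cast this.symm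
      have hgl : ∀ l : Fin r, ∑ i, g i * (((pf i).2 l : ℚ)) = 0 := by
        intro l
        have := congrFun hg l
        simpa [Finset.sum_apply] using this
      have hrel : ∑ p ∈ Ψ, n p • p.2 = 0 := by
        rw [← Finset.sum_subset hSsub (fun p _ hnp => by
          simp only [hn]
          rw [dif_neg hnp, zero_smul])]
        rw [← Finset.sum_coe_sort S (fun p => n p • p.2)]
        rw [Fintype.sum_equiv e (fun x => n (↑x : Pt r) • (↑x : Pt r).2)
          (fun i => nI i • (pf i).2) (fun x => by
            show n (↑x : Pt r) • (↑x : Pt r).2 = nI (e x) • (pf (e x)).2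
            have h3 : pf (e x) = (↑x : Pt r) := by simp [hpf]
            have h4 := hnval (e x)
            rw [h3] at h4
            rw [h3, h4])]
        have hint : ∀ l : Fin r, ∑ i, nI i * (pf i).2 l = 0 := by
          intro l
          have hq : ((∑ i, nI i * (pf i).2 l : ℤ) : ℚ) = 0 := by
            push_cast
            rw [Finset.sum_congr rfl (fun i (_ : i ∈ Finset.univ) => by
              rw [hcast i, mul_assoc])]
            rw [← Finset.mul_sum, hgl l, mul_zero]
          exact_mod_cast hq
        funext l
        rw [Finset.sum_apply, Pi.zero_apply]
        simp only [Pi.smul_apply, smul_eq_mul]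
        exact hint l
      have hzero : ∀ p, n p = 0 := by
        by_contra hcon
        push_neg at hcon
        obtain ⟨p1, hp1⟩ := hcon
        apply hdep
        refine ⟨n, fun p hp => ?_, hrel, p1, hp1⟩
        have hpS : p ∈ S := by
          by_contra hns
          apply hp
          simp only [hn]
          rw [dif_neg hns]
        exact ⟨hSsub hpS, (Finset.mem_filter.mp hpS).2⟩
      intro i
      have h5 : nI i = 0 := by rw [← hnval i, hzero]
      have := hcast i
      rw [h5] at this
      have h6 : ((b : ℤ) : ℚ) * g i = 0 := by exact_mod_cast this.symm
      exact (mul_eq_zero.mp h6).resolve_left hbne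
    -- now produce the generator
    have hprod : (∏ p ∈ Ψ, algK r (ffac p) ^ h p)
        = ∏ i : Fin S.card, algK r (ffac (pf i)) ^ h (pf i) := by
      rw [← Finset.prod_subset hSsub (fun p hp hnp => by
        have h0 : h p = 0 := by
          by_contra hcon
          exact hnp (Finset.mem_filter.mpr ⟨hp, Nat.pos_of_ne_zero hcon⟩)
        rw [h0, pow_zero])]
      rw [← Finset.prod_coe_sort S (fun p => algK r (ffac p) ^ h p)]
      exact Fintype.prod_equiv e _ _ (fun x => by
        have h3 : pf (e x) = ↑x := by rw [hpf]; simp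
        rw [h3])
    refine Submodule.subset_span ⟨1, one_mem_CC, _,
      ⟨S.card, pf, fun i => h (pf i), hpfΨ, hpfpos, hli, rfl⟩, ?_⟩
    rw [map_one, one_mul, GG, hprod]
    simp only [ffac, sing, algK]

end MainInduction

end Stmt3Aux

/-- **Proposition 3.2 (reduction to linearly independent denominators).**
Let `Ψ ⊂ ℂˣ × ℤ^r` be finite with `1 − a·e^ψ ≠ 0` for all `(a,ψ) ∈ Ψ`, let `Γ` be the
subgroup generated by the projection of `Ψ` to `ℤ^r`, and let `ℂ[Γ] ⊆ A` be the span of the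
`e^γ`, `γ ∈ Γ`. Then in the fraction field of `A` the element `∏_{(a,ψ)∈Ψ} (1 − a e^ψ)⁻¹` is
a `ℂ[Γ]`-linear combination of elements `∏ᵢ (1 − aᵢ e^{ψᵢ})^{-hᵢ}` with `(aᵢ,ψᵢ) ∈ Ψ`,
`hᵢ > 0`, and `ψ₁,…,ψ_s` linearly independent over `ℚ`. -/
theorem stmt3 {r : ℕ} (Ψ : Finset (ℂˣ × (Fin r → ℤ)))
    (hΨ : ∀ p ∈ Ψ, (1 : LaurentA r) - AddMonoidAlgebra.single p.2 ((p.1 : ℂ)) ≠ 0)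
    (Γ : AddSubgroup (Fin r → ℤ))
    (hΓ : Γ = AddSubgroup.closure {ψ | ∃ a : ℂˣ, (a, ψ) ∈ Ψ}) :
    ∃ (n : ℕ) (c : Fin n → LaurentA r) (g : Fin n → FractionRing (LaurentA r)),
      (∀ j, c j ∈ Submodule.span ℂ
        {x : LaurentA r | ∃ γ ∈ Γ, x = AddMonoidAlgebra.single γ (1 : ℂ)}) ∧
      (∀ j, ∃ (s : ℕ) (p : Fin s → ℂˣ × (Fin r → ℤ)) (h : Fin s → ℕ),
          (∀ i, p i ∈ Ψ) ∧ (∀ i, 0 < h i) ∧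
          LinearIndependent ℚ (fun (i : Fin s) (l : Fin r) => (((p i).2 l : ℚ))) ∧
          g j = (∏ i, (algebraMap (LaurentA r) (FractionRing (LaurentA r))
              ((1 : LaurentA r) - AddMonoidAlgebra.single (p i).2 (((p i).1 : ℂ)))) ^ (h i))⁻¹) ∧
      (algebraMap (LaurentA r) (FractionRing (LaurentA r))
          (∏ p ∈ Ψ, ((1 : LaurentA r) - AddMonoidAlgebra.single p.2 ((p.1 : ℂ)))))⁻¹ =
        ∑ j, algebraMap (LaurentA r) (FractionRing (LaurentA r)) (c j) * g j := by
  classical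
  have hΨ' : ∀ p ∈ Ψ, Stmt3Aux.ffac p ≠ 0 := fun p hp => by
    have := hΨ p hp
    simpa [Stmt3Aux.ffac, Stmt3Aux.sing] using this
  have hsing : ∀ p ∈ Ψ, Stmt3Aux.sing p ∈ Stmt3Aux.CC Γ := by
    intro p hp
    have hγ : p.2 ∈ Γ := by
      rw [hΓ]
      exact AddSubgroup.subset_closure ⟨p.1, by simpa using hp⟩
    exact Stmt3Aux.single_mem_CC hγ _
  have hmem := Stmt3Aux.main_induction hΨ' hsing (Stmt3Aux.mu Ψ (fun _ => 1))
    (fun _ => 1) le_rfl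
  have hGG : Stmt3Aux.GG Ψ (fun _ => 1)
      = (algebraMap (LaurentA r) (FractionRing (LaurentA r))
          (∏ p ∈ Ψ, ((1 : LaurentA r) - AddMonoidAlgebra.single p.2 ((p.1 : ℂ)))))⁻¹ := by
    rw [Stmt3Aux.GG, map_prod]
    simp [Stmt3Aux.ffac, Stmt3Aux.sing, Stmt3Aux.algK]
  rw [hGG] at hmem
  rw [Stmt3Aux.MM, Submodule.mem_span_set'] at hmem
  obtain ⟨nn, fc, gf, hsum⟩ := hmem
  choose cfun hcfun gfun hgfun hrepr using fun j => (gf j).2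
  refine ⟨nn, fun j => fc j • cfun j, fun j => gfun j, ?_, ?_, ?_⟩
  · intro j
    exact Submodule.smul_mem _ _ (hcfun j)
  · intro j
    exact hgfun j
  · rw [← hsum]
    refine Finset.sum_congr rfl (fun j _ => ?_)
    calc (fc j : ℂ) • ((gf j : FractionRing (LaurentA r)))
        = fc j • (Stmt3Aux.algK r (cfun j) * gfun j) := by rw [← hrepr j]
      _ = (fc j • Stmt3Aux.algK r (cfun j)) * gfun j := by rw [smul_mul_assoc]
      _ = Stmt3Aux.algK r (fc j • cfun j) * gfun j := by rw [Stmt3Aux.algK_smul]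
      _ = algebraMap (LaurentA r) (FractionRing (LaurentA r)) (fc j • cfun j) * gfun j := rfl
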